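/- Let p ≥ 2 and let G be a K_{1,p+1}-free 2p-regular graph. Then G admits a (p+2)-star colouring if and only if G admits a locally bijective homomorphism to L*(K_{p+2}). -/

import Mathlib

set_option linter.unusedSectionVars false

open SimpleGraph

/-- Locally bijective homomorphism between simple graphs. -/
def IsLBH {V W : Type*} (G : SimpleGraph V) (H : SimpleGraph W) (psi : V → W) : Prop :=
  (∀ ⦃u v⦄, G.Adj u v → H.Adj (psi u) (psi v)) ∧
    ∀ v, Set.BijOn psi (G.neighborSet v) (H.neighborSet (psi v))

/-- `f` is a star colouring of `G`: a proper colouring with no bicoloured 4-vertex path. -/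
def IsStarColoring {V α : Type*} (G : SimpleGraph V) (f : V → α) : Prop :=
  (∀ ⦃u v⦄, G.Adj u v → f u ≠ f v) ∧
    ∀ a b c d, G.Adj a b → G.Adj b c → G.Adj c d →
      a ≠ c → b ≠ d → a ≠ d → ¬(f a = f c ∧ f b = f d)

/-- Vertex set of the oriented line graph of the complete graph `K_q` on `ZMod q`. -/
def LKV (q : ℕ) : Type := {x : ZMod q × ZMod q // x.1 ≠ x.2}

/-- Arc relation of the oriented line graph `L⃗(K_q)`: an arc from `(i,j)` to `(j,k)`
whenever `k ∉ {i, j}`. -/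
def LKArc (q : ℕ) (a b : LKV q) : Prop := a.1.2 = b.1.1 ∧ a.1.1 ≠ b.1.2

/-- The underlying undirected graph `L*(K_q)` of `L⃗(K_q)`. -/
def LstarK (q : ℕ) : SimpleGraph (LKV q) := SimpleGraph.fromRel (LKArc q)

lemma lstar_adj {q : ℕ} {a b : LKV q} :
    (LstarK q).Adj a b ↔ a ≠ b ∧ (LKArc q a b ∨ LKArc q b a) := Iff.rfl

/-- first coordinates of adjacent vertices of `L*(K_q)` differ -/
lemma lstar_fst_ne {q : ℕ} {a b : LKV q} (h : (LstarK q).Adj a b) : a.1.1 ≠ b.1.1 := by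
  rcases h with ⟨hne, h | h⟩
  · rw [← h.1]; exact a.2
  · rw [← h.1]; exact fun e => b.2 e.symm

/-- tail colouring is a star colouring of `L*(K_q)` : no bicoloured P4 -/
lemma lstar_no_p4 {q : ℕ} {x1 x2 x3 x4 : LKV q}
    (h12 : (LstarK q).Adj x1 x2) (h23 : (LstarK q).Adj x2 x3) (h34 : (LstarK q).Adj x3 x4)
    (h13 : x1 ≠ x3) (h24 : x2 ≠ x4)
    (c13 : x1.1.1 = x3.1.1) (c24 : x2.1.1 = x4.1.1) : False := by
  rcases h12 with ⟨-, h12⟩; rcases h23 with ⟨-, h23⟩; rcases h34 with ⟨-, h34⟩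
  by_cases hb : x2.1.2 = x3.1.1
  · -- x2 = (y, x)
    -- edge x2 x3 : Arc x3 x2 impossible
    have hc2 : x2.1.1 ≠ x3.1.2 := by
      rcases h23 with ⟨-, h⟩ | ⟨h1, h2⟩
      · exact h
      · exact absurd hb.symm h2
    -- edge x3 x4: must be Arc x4 x3, giving x4 = x2
    have : x4 = x2 := by
      rcases h34 with ⟨h1, h2⟩ | ⟨h1, h2⟩
      · -- Arc x3 x4 : x3.1.2 = x4.1.1 = x2.1.1, but x2.1.1 ≠ x3.1.2
        exact absurd (c24.trans h1.symm) hc2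
      · -- Arc x4 x3 : x4.1.2 = x3.1.1, x4.1.1 = x2.1.1, x2.1.2 = x3.1.1
        apply Subtype.ext; apply Prod.ext
        · exact c24.symm
        · exact h1.trans hb.symm
    exact h24 this.symm
  · -- x2.1.2 ≠ x3.1.1 = x1.1.1
    have hb' : x2.1.2 ≠ x1.1.1 := fun e => hb (e.trans c13)
    have hx1 : x1.1.2 = x2.1.1 := by
      rcases h12 with ⟨h1, h2⟩ | ⟨h1, h2⟩
      · exact h1
      · exact absurd (h1.trans c13) hb
    have hx3 : x3.1.2 = x2.1.1 := by
      rcases h23 with ⟨h1, h2⟩ | ⟨h1, h2⟩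
      · exact absurd h1 hb
      · exact h1
    exact h13 (Subtype.ext (Prod.ext c13 (hx1.trans hx3.symm)))

lemma backward {V : Type*} (p : ℕ) (G : SimpleGraph V)
    (psi : V → LKV (p + 2)) (h : IsLBH G (LstarK (p + 2)) psi) :
    ∃ f : V → Fin (p + 2), IsStarColoring G f := by
  refine ⟨fun v => (psi v).1.1, ?_, ?_⟩
  · intro u v huv
    exact lstar_fst_ne (h.1 huv)
  · rintro a b c d hab hbc hcd hac hbd had ⟨e13, e24⟩
    have pac : psi a ≠ psi c :=
      fun e => hac ((h.2 b).2.1 (G.mem_neighborSet b a |>.2 hab.symm)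
        (G.mem_neighborSet b c |>.2 hbc) e)
    have pbd : psi b ≠ psi d :=
      fun e => hbd ((h.2 c).2.1 (G.mem_neighborSet c b |>.2 hbc.symm)
        (G.mem_neighborSet c d |>.2 hcd) e)
    exact lstar_no_p4 (h.1 hab) (h.1 hbc) (h.1 hcd) pac pbd e13 e24

section Forward
variable {V : Type*} [Fintype V] {p : ℕ} (G : SimpleGraph V) [DecidableRel G.Adj]
  (f : V → ZMod (p+2))

/-- neighbours of `v` with colour `c` -/
def Nc (v : V) (c : ZMod (p+2)) : Finset V := (G.neighborFinset v).filter (fun u => f u = c)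

/-- `u` dominates `v` -/
def doms (u v : V) : Prop := G.Adj u v ∧ 2 ≤ (Nc G f u (f v)).card

instance : ∀ u v, Decidable (doms G f u v) := fun _ _ =>
  inferInstanceAs (Decidable (_ ∧ _))

def Tset (v : V) : Finset V := (G.neighborFinset v).filter (fun u => ¬ doms G f v u)
def Hset (v : V) : Finset V := (G.neighborFinset v).filter (fun u => doms G f v u)
def Dset (v : V) : Finset V := Finset.univ.filter (fun u => doms G f u v)

variable {G f}

lemma mem_Nc {v c u} : u ∈ Nc G f v c ↔ G.Adj v u ∧ f u = c := by
  simp [Nc]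

lemma Nc_self (hf : IsStarColoring G f) (v : V) : Nc G f v (f v) = ∅ := by
  ext u
  simp only [mem_Nc, Finset.notMem_empty, iff_false, not_and]
  exact fun h => hf.1 (G.adj_symm h)

/-- two same-coloured neighbours of `v` force every other neighbour `w ≠ v`
of one of them to avoid colour `f v` -/
lemma star_key (hf : IsStarColoring G f) {v u1 u2 w : V}
    (h1 : G.Adj v u1) (h2 : G.Adj v u2) (hne : u1 ≠ u2) (hc : f u1 = f u2)
    (hw : G.Adj u1 w) (hwv : w ≠ v) : f w ≠ f v := by
  intro e
  have hu2w : u2 ≠ w := by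
    rintro rfl
    exact hf.1 hw hc
  exact hf.2 u2 v u1 w (G.adj_symm h2) h1 hw (Ne.symm hne) hwv.symm hu2w ⟨hc.symm, e.symm⟩

lemma dom_unique (hf : IsStarColoring G f) {u v : V} (h : doms G f v u) :
    Nc G f u (f v) = {v} := by
  obtain ⟨hadj, hcard⟩ := h
  have hu : u ∈ Nc G f v (f u) := mem_Nc.2 ⟨hadj, rfl⟩
  obtain ⟨u', hu', hne⟩ :=
    Finset.exists_mem_ne (s := Nc G f v (f u)) (by omega) u
  rw [mem_Nc] at hu'
  apply Finset.eq_singleton_iff_unique_mem.2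
  refine ⟨mem_Nc.2 ⟨G.adj_symm hadj, rfl⟩, ?_⟩
  intro w hw
  rw [mem_Nc] at hw
  by_contra hwv
  exact star_key hf hadj hu'.1 (Ne.symm hne) hu'.2.symm hw.1 hwv hw.2

lemma not_doms (hf : IsStarColoring G f) {u v : V} (h : doms G f v u) :
    ¬ doms G f u v := by
  rintro ⟨-, h2⟩
  have := dom_unique hf h
  rw [this] at h2
  simp at h2

lemma sum_Nc (hreg : G.IsRegularOfDegree (2*p)) (v : V) :
    ∑ c : ZMod (p+2), (Nc G f v c).card = 2*p := by
  have h2 : G.degree v = ∑ c : ZMod (p+2), (Nc G f v c).card :=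
    Finset.card_eq_sum_card_fiberwise
      (fun (x : V) (_ : x ∈ G.neighborFinset v) => Finset.mem_univ (f x))
  rw [hreg v] at h2
  exact h2.symm

lemma Nc_of_T {v u : V} (hu : u ∈ Tset G f v) : Nc G f v (f u) = {u} := by
  rw [Tset, Finset.mem_filter, G.mem_neighborFinset] at hu
  have hmem : u ∈ Nc G f v (f u) := mem_Nc.2 ⟨hu.1, rfl⟩
  have hcard : (Nc G f v (f u)).card < 2 := by
    by_contra h
    exact hu.2 ⟨hu.1, by omega⟩
  have : (Nc G f v (f u)).card = 1 := by
    have := Finset.card_pos.2 ⟨u, hmem⟩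
    omega
  obtain ⟨a, ha⟩ := Finset.card_eq_one.1 this
  rw [ha] at hmem ⊢
  rw [Finset.mem_singleton] at hmem
  rw [hmem]

lemma Tcard_le (hp : 2 ≤ p) (hreg : G.IsRegularOfDegree (2*p)) (hf : IsStarColoring G f)
    (v : V) : (Tset G f v).card ≤ p := by
  classical
  have hinj : Set.InjOn f (Tset G f v) := by
    intro u hu u' hu' he
    have h1 := Nc_of_T (f := f) (Finset.mem_coe.1 hu)
    have h2 := Nc_of_T (f := f) (Finset.mem_coe.1 hu')
    rw [he, h2] at h1
    exact (Finset.singleton_inj.1 h1).symm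
  set Lset := (Tset G f v).image f with hL
  have card_L : Lset.card = (Tset G f v).card := Finset.card_image_of_injOn hinj
  have hLsub : Lset ⊆ Finset.univ.erase (f v) := by
    intro k hk
    rw [hL, Finset.mem_image] at hk
    obtain ⟨u, hu, rfl⟩ := hk
    rw [Tset, Finset.mem_filter, G.mem_neighborFinset] at hu
    exact Finset.mem_erase.2 ⟨hf.1 (G.adj_symm hu.1), Finset.mem_univ _⟩
  have hNe : ∃ c, 2 ≤ (Nc G f v c).card := by
    by_contra h
    push_neg at h
    have hs := sum_Nc (f := f) hreg v
    have h0 := Nc_self hf v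
    have hle : ∑ c : ZMod (p+2), (Nc G f v c).card ≤
        ∑ c ∈ Finset.univ.erase (f v), (Nc G f v c).card := by
      rw [← Finset.sum_erase_add _ _ (Finset.mem_univ (f v)), h0]
      simp
    have hle2 : ∑ c ∈ Finset.univ.erase (f v), (Nc G f v c).card ≤
        (Finset.univ.erase (f v)).card * 1 :=
      Finset.sum_le_card_nsmul _ _ 1 (fun c _ => by have := h c; omega)
    have hcard : (Finset.univ.erase (f v)).card = p + 1 := by
      rw [Finset.card_erase_of_mem (Finset.mem_univ _), Finset.card_univ, ZMod.card]
      omega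
    omega
  obtain ⟨c0, hc0⟩ := hNe
  have hc0f : c0 ≠ f v := by
    rintro rfl
    rw [Nc_self hf v] at hc0
    simp at hc0
  have hc0L : c0 ∉ Lset := by
    intro hk
    rw [hL, Finset.mem_image] at hk
    obtain ⟨u, hu, rfl⟩ := hk
    rw [Nc_of_T (f := f) hu] at hc0
    simp at hc0
  have hss : Lset ⊂ Finset.univ.erase (f v) :=
    ⟨hLsub, fun hsub => hc0L (hsub (Finset.mem_erase.2 ⟨hc0f, Finset.mem_univ _⟩))⟩
  have := Finset.card_lt_card hss
  rw [Finset.card_erase_of_mem (Finset.mem_univ _), Finset.card_univ, ZMod.card] at this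
  omega

lemma Dsub (hf : IsStarColoring G f) (v : V) : Dset G f v ⊆ Tset G f v := by
  intro u hu
  rw [Dset, Finset.mem_filter] at hu
  rw [Tset, Finset.mem_filter, G.mem_neighborFinset]
  exact ⟨(hu.2.1).symm, not_doms hf hu.2⟩

lemma sum_H_eq_sum_D :
    ∑ v : V, (Hset G f v).card = ∑ v : V, (Dset G f v).card := by
  have h1 : ∀ v : V, (Hset G f v).card =
      (Finset.univ.filter (fun u => doms G f v u)).card := by
    intro v
    congr 1
    ext u
    simp only [Hset, Finset.mem_filter, G.mem_neighborFinset, Finset.mem_univ, true_and]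
    exact ⟨fun h => h.2, fun h => ⟨h.1, h⟩⟩
  simp only [h1, Dset, Finset.card_filter]
  exact Finset.sum_comm

lemma main_count (hp : 2 ≤ p) (hreg : G.IsRegularOfDegree (2*p)) (hf : IsStarColoring G f) :
    ∀ v, (Tset G f v).card = p ∧ Dset G f v = Tset G f v := by
  classical
  have hHT : ∀ v : V, (Hset G f v).card + (Tset G f v).card = 2*p := by
    intro v
    have h := Finset.card_filter_add_card_filter_not
      (s := G.neighborFinset v) (p := fun u => doms G f v u)
    have hdeg : (G.neighborFinset v).card = 2*p := hreg v
    rw [hdeg] at h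
    exact h
  have hsum := sum_H_eq_sum_D (G := G) (f := f)
  have hDT : ∀ v : V, (Dset G f v).card ≤ (Tset G f v).card :=
    fun v => Finset.card_le_card (Dsub hf v)
  have hTle : ∀ v : V, (Tset G f v).card ≤ p := fun v => Tcard_le hp hreg hf v
  set n := Fintype.card V with hn
  have e1 : ∑ v : V, (Hset G f v).card + ∑ v : V, (Tset G f v).card = p*n + p*n := by
    rw [← Finset.sum_add_distrib]
    calc ∑ v : V, ((Hset G f v).card + (Tset G f v).card) = ∑ _v : V, 2*p := by
          exact Finset.sum_congr rfl (fun v _ => hHT v)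
      _ = p*n + p*n := by
          rw [Finset.sum_const, Finset.card_univ, smul_eq_mul]
          ring
  have e2 : ∑ v : V, (Dset G f v).card ≤ ∑ v : V, (Tset G f v).card :=
    Finset.sum_le_sum (fun v _ => hDT v)
  have e3 : ∑ v : V, (Tset G f v).card ≤ p * n := by
    have := Finset.sum_le_card_nsmul Finset.univ (fun v => (Tset G f v).card) p
      (fun v _ => hTle v)
    rwa [Finset.card_univ, smul_eq_mul, mul_comm] at this
  have eT : ∑ v : V, (Tset G f v).card = p * n := by omega
  have eD : ∑ v : V, (Dset G f v).card = ∑ v : V, (Tset G f v).card := by omega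
  have hTall : ∀ v : V, (Tset G f v).card = p := by
    by_contra h
    push_neg at h
    obtain ⟨v0, hv0⟩ := h
    have hlt : ∑ v : V, (Tset G f v).card < ∑ _v : V, p :=
      Finset.sum_lt_sum (fun v _ => hTle v)
        ⟨v0, Finset.mem_univ _, lt_of_le_of_ne (hTle v0) hv0⟩
    rw [Finset.sum_const, Finset.card_univ, smul_eq_mul, mul_comm, ← hn] at hlt
    omega
  intro v
  refine ⟨hTall v, ?_⟩
  apply Finset.eq_of_subset_of_card_le (Dsub hf v)
  by_contra h
  push_neg at h
  have hlt : ∑ v : V, (Dset G f v).card < ∑ v : V, (Tset G f v).card :=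
    Finset.sum_lt_sum (fun v _ => hDT v) ⟨v, Finset.mem_univ _, h⟩
  omega

lemma HT_card (hreg : G.IsRegularOfDegree (2*p)) (v : V) :
    (Hset G f v).card + (Tset G f v).card = 2*p := by
  have h := Finset.card_filter_add_card_filter_not
    (s := G.neighborFinset v) (p := fun u => doms G f v u)
  have hdeg : (G.neighborFinset v).card = 2*p := hreg v
  rw [hdeg] at h
  exact h

lemma master (hp : 2 ≤ p) (hreg : G.IsRegularOfDegree (2*p)) (hf : IsStarColoring G f)
    (v : V) : ∃ c : ZMod (p+2), c ≠ f v ∧ (Nc G f v c).card = p ∧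
      (∀ k, k ≠ f v → k ≠ c → (Nc G f v k).card = 1) ∧
      (∀ c', 2 ≤ (Nc G f v c').card → c' = c) ∧
      (∀ u, G.Adj v u → f u ≠ c → doms G f u v) := by
  classical
  obtain ⟨hT, hD⟩ := main_count hp hreg hf v
  have hinj : Set.InjOn f (Tset G f v) := by
    intro u hu u' hu' he
    have h1 := Nc_of_T (f := f) (Finset.mem_coe.1 hu)
    have h2 := Nc_of_T (f := f) (Finset.mem_coe.1 hu')
    rw [he, h2] at h1
    exact (Finset.singleton_inj.1 h1).symm
  set Lset := (Tset G f v).image f with hL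
  have card_L : Lset.card = p := (Finset.card_image_of_injOn hinj).trans hT
  have hLsub : Lset ⊆ Finset.univ.erase (f v) := by
    intro k hk
    rw [hL, Finset.mem_image] at hk
    obtain ⟨u, hu, rfl⟩ := hk
    rw [Tset, Finset.mem_filter, G.mem_neighborFinset] at hu
    exact Finset.mem_erase.2 ⟨hf.1 (G.adj_symm hu.1), Finset.mem_univ _⟩
  have hL1 : ∀ k ∈ Lset, (Nc G f v k).card = 1 := by
    intro k hk
    rw [hL, Finset.mem_image] at hk
    obtain ⟨u, hu, rfl⟩ := hk
    rw [Nc_of_T (f := f) hu, Finset.card_singleton]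
  have hRcard : ((Finset.univ.erase (f v)) \ Lset).card = 1 := by
    rw [Finset.card_sdiff_of_subset hLsub, card_L,
      Finset.card_erase_of_mem (Finset.mem_univ _), Finset.card_univ, ZMod.card]
    omega
  obtain ⟨c, hc⟩ := Finset.card_eq_one.1 hRcard
  have hcmem : c ∈ (Finset.univ.erase (f v)) \ Lset := hc ▸ Finset.mem_singleton_self c
  rw [Finset.mem_sdiff, Finset.mem_erase] at hcmem
  have hcf : c ≠ f v := hcmem.1.1
  have hcL : c ∉ Lset := hcmem.2
  -- membership in R iff: k ≠ f v and k ∉ Lset implies k = c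
  have hRc : ∀ k : ZMod (p+2), k ≠ f v → k ∉ Lset → k = c := by
    intro k h1 h2
    have : k ∈ (Finset.univ.erase (f v)) \ Lset :=
      Finset.mem_sdiff.2 ⟨Finset.mem_erase.2 ⟨h1, Finset.mem_univ _⟩, h2⟩
    rw [hc, Finset.mem_singleton] at this
    exact this
  have huniq : ∀ c' : ZMod (p+2), 2 ≤ (Nc G f v c').card → c' = c := by
    intro c' h2
    have h1 : c' ≠ f v := by
      rintro rfl
      rw [Nc_self hf v] at h2
      simp at h2
    have h3 : c' ∉ Lset := by
      intro hmem
      have := hL1 c' hmem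
      omega
    exact hRc c' h1 h3
  have hlight : ∀ k, k ≠ f v → k ≠ c → (Nc G f v k).card = 1 := by
    intro k h1 h2
    have : k ∈ Lset := by
      by_contra h3
      exact h2 (hRc k h1 h3)
    exact hL1 k this
  -- existence of a heavy colour
  have hNe : ∃ c0, 2 ≤ (Nc G f v c0).card := by
    by_contra h
    push_neg at h
    have hs := sum_Nc (f := f) hreg v
    have h0 := Nc_self hf v
    have hle : ∑ c' : ZMod (p+2), (Nc G f v c').card ≤
        ∑ c' ∈ Finset.univ.erase (f v), (Nc G f v c').card := by
      rw [← Finset.sum_erase_add _ _ (Finset.mem_univ (f v)), h0]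
      simp
    have hle2 : ∑ c' ∈ Finset.univ.erase (f v), (Nc G f v c').card ≤
        (Finset.univ.erase (f v)).card * 1 :=
      Finset.sum_le_card_nsmul _ _ 1 (fun c' _ => by have := h c'; omega)
    have hcard : (Finset.univ.erase (f v)).card = p + 1 := by
      rw [Finset.card_erase_of_mem (Finset.mem_univ _), Finset.card_univ, ZMod.card]
      omega
    omega
  obtain ⟨c0, hc0⟩ := hNe
  have hc2 : 2 ≤ (Nc G f v c).card := (huniq c0 hc0) ▸ hc0
  -- Nc v c is exactly Hset v
  have hNH : Nc G f v c = Hset G f v := by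
    ext u
    rw [mem_Nc, Hset, Finset.mem_filter, G.mem_neighborFinset]
    constructor
    · rintro ⟨h1, h2⟩
      exact ⟨h1, h1, by rwa [h2]⟩
    · rintro ⟨h1, h2⟩
      exact ⟨h1, huniq _ h2.2⟩
  have hNcard : (Nc G f v c).card = p := by
    have := HT_card (f := f) hreg v
    rw [hNH]
    omega
  refine ⟨c, hcf, hNcard, hlight, huniq, ?_⟩
  intro u hadj hfu
  have hfu' : f u ≠ f v := hf.1 (G.adj_symm hadj)
  have h1 : (Nc G f v (f u)).card = 1 := hlight _ hfu' hfu
  have hTmem : u ∈ Tset G f v := by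
    rw [Tset, Finset.mem_filter, G.mem_neighborFinset]
    exact ⟨hadj, fun hd => by have := hd.2; omega⟩
  have : u ∈ Dset G f v := hD ▸ hTmem
  rw [Dset, Finset.mem_filter] at this
  exact this.2

lemma exists_adj_pair
    (hfree : ¬ Nonempty (completeBipartiteGraph (Fin 1) (Fin (p + 1)) ↪g G))
    (v : V) (S : Finset V) (hcard : S.card = p + 1) (hadj : ∀ u ∈ S, G.Adj v u) :
    ∃ x ∈ S, ∃ y ∈ S, G.Adj x y := by
  by_contra h
  push_neg at h
  apply hfree
  have e := S.equivFinOfCardEq hcard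
  set g : Fin (p+1) → V := fun i => (e.symm i : V) with hg
  have hginj : Function.Injective g := fun i j hij => by
    apply e.symm.injective
    exact Subtype.ext hij
  have hgS : ∀ i, g i ∈ S := fun i => (e.symm i).2
  have hvS : v ∉ S := fun hv => G.irrefl (hadj v hv)
  refine ⟨⟨⟨Sum.elim (fun _ => v) g, ?_⟩, ?_⟩⟩
  · rintro (i | i) (j | j) hij <;>
      simp only [Sum.elim_inl, Sum.elim_inr] at hij
    · rw [Subsingleton.elim i j]
    · exact absurd (hij ▸ hgS j) hvS
    · exact absurd (hij ▸ hgS i) hvS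
    · rw [hginj hij]
  · rintro (i | i) (j | j) <;>
      simp only [RelEmbedding.coe_mk, Function.Embedding.coeFn_mk, Sum.elim_inl, Sum.elim_inr,
        completeBipartiteGraph_adj, Sum.isLeft_inl, Sum.isRight_inl, Sum.isLeft_inr,
        Sum.isRight_inr]
    · show G.Adj v v ↔ _; simp
    · show G.Adj v (g j) ↔ _; simpa using hadj _ (hgS j)
    · show G.Adj (g i) v ↔ _; simpa using G.adj_symm (hadj _ (hgS i))
    · show G.Adj (g i) (g j) ↔ _; simpa using fun hA => h _ (hgS i) _ (hgS j) hA
end Forward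

lemma forward {V : Type*} [Fintype V] {p : ℕ} (hp : 2 ≤ p)
    (G : SimpleGraph V) [DecidableRel G.Adj] (hreg : G.IsRegularOfDegree (2 * p))
    (hfree : ¬ Nonempty (completeBipartiteGraph (Fin 1) (Fin (p + 1)) ↪g G))
    (f : V → ZMod (p+2)) (hf : IsStarColoring G f) :
    ∃ psi : V → LKV (p + 2), IsLBH G (LstarK (p + 2)) psi := by
  classical
  choose j hj1 hj2 hj3 hj4 hj5 using master hp hreg hf
  set psi : V → LKV (p+2) := fun v => ⟨(f v, j v), fun e => (hj1 v) e.symm⟩ with hpsi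
  have dich : ∀ {u v}, G.Adj u v → (f u = j v ∧ j u ≠ f v) ∨ (f u ≠ j v ∧ j u = f v) := by
    intro u v hadj
    by_cases hc : f u = j v
    · left
      refine ⟨hc, ?_⟩
      have hd : doms G f v u := ⟨G.adj_symm hadj, by rw [hc, hj2 v]; omega⟩
      intro e
      have h1 := dom_unique hf hd
      have h2 := hj2 u
      rw [e, h1] at h2
      rw [Finset.card_singleton] at h2
      omega
    · right
      have hd : doms G f u v := hj5 v u (G.adj_symm hadj) hc
      exact ⟨hc, (hj4 u (f v) hd.2).symm⟩
  have hom : ∀ {u v}, G.Adj u v → (LstarK (p+2)).Adj (psi u) (psi v) := by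
    intro u v hadj
    have hne : psi u ≠ psi v := fun e => hf.1 hadj (congrArg (fun x => x.1.1) e)
    rcases dich hadj with ⟨h1, h2⟩ | ⟨h1, h2⟩
    · exact ⟨hne, Or.inr ⟨h1.symm, fun e => h2 e.symm⟩⟩
    · exact ⟨hne, Or.inl ⟨h2, h1⟩⟩
  have light_jw : ∀ v w, G.Adj v w → f w ≠ j v → j w = f v := by
    intro v w hadj hlight
    rcases dich (G.adj_symm hadj) with ⟨h1, h2⟩ | ⟨h1, h2⟩
    · exact absurd h1 hlight
    · exact h2
  have heavy_ne : ∀ v u, u ∈ Nc G f v (j v) → j u ≠ f v := by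
    intro v u hu
    rw [mem_Nc] at hu
    rcases dich (G.adj_symm hu.1) with ⟨h1, h2⟩ | ⟨h1, h2⟩
    · exact h2
    · exact absurd hu.2 h1
  have heavy_surj : ∀ v k, k ≠ f v → k ≠ j v → ∃ u, u ∈ Nc G f v (j v) ∧ j u = k := by
    intro v k hk1 hk2
    obtain ⟨w, hw⟩ := Finset.card_eq_one.1 (hj3 v k hk1 hk2)
    have hwmem : w ∈ Nc G f v k := hw ▸ Finset.mem_singleton_self w
    rw [mem_Nc] at hwmem
    obtain ⟨hadjvw, hfw⟩ := hwmem
    have hfwj : f w ≠ j v := by rw [hfw]; exact hk2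
    have hjw : j w = f v := light_jw v w hadjvw hfwj
    have hwn : w ∉ Nc G f v (j v) := by
      rw [mem_Nc]
      rintro ⟨-, e⟩
      exact hfwj (e)
    have hcardS : (insert w (Nc G f v (j v))).card = p + 1 := by
      rw [Finset.card_insert_of_notMem hwn, hj2 v]
    have hadjS : ∀ u ∈ insert w (Nc G f v (j v)), G.Adj v u := by
      intro u hu
      rcases Finset.mem_insert.1 hu with rfl | hu
      · exact hadjvw
      · exact (mem_Nc.1 hu).1
    obtain ⟨x, hx, y, hy, hxy⟩ := exists_adj_pair hfree v _ hcardS hadjS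
    have key : ∀ u, u ∈ Nc G f v (j v) → G.Adj w u → j u = k := by
      intro u hu hadj2
      rcases dich hadj2 with ⟨h1, h2⟩ | ⟨h1, h2⟩
      · exact (h1.symm.trans hfw)
      · rw [mem_Nc] at hu
        rw [hu.2] at h2
        exact absurd (hjw.symm.trans h2).symm (hj1 v)
    rcases Finset.mem_insert.1 hx with rfl | hx'
    · rcases Finset.mem_insert.1 hy with rfl | hy'
      · exact absurd hxy (G.irrefl)
      · exact ⟨y, hy', key y hy' hxy⟩
    · rcases Finset.mem_insert.1 hy with rfl | hy'
      · exact ⟨x, hx', key x hx' (G.adj_symm hxy)⟩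
      · rw [mem_Nc] at hx' hy'
        exact absurd (hx'.2.trans hy'.2.symm) (hf.1 hxy)
  have heavy_inj : ∀ v : V, Set.InjOn j (Nc G f v (j v)) := by
    intro v
    rw [← Finset.card_image_iff]
    have himg : (Nc G f v (j v)).image j = (Finset.univ.erase (f v)).erase (j v) := by
      apply Finset.Subset.antisymm
      · intro k hk
        rw [Finset.mem_image] at hk
        obtain ⟨u, hu, rfl⟩ := hk
        have h1 : j u ≠ f v := heavy_ne v u hu
        have h2 : j u ≠ j v := by
          rw [← (mem_Nc.1 hu).2]
          exact hj1 u
        exact Finset.mem_erase.2 ⟨h2, Finset.mem_erase.2 ⟨h1, Finset.mem_univ _⟩⟩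
      · intro k hk
        rw [Finset.mem_erase, Finset.mem_erase] at hk
        obtain ⟨u, hu, he⟩ := heavy_surj v k hk.2.1 hk.1
        exact Finset.mem_image.2 ⟨u, hu, he⟩
    have h1 : ((Finset.univ.erase (f v)).erase (j v)).card = p := by
      rw [Finset.card_erase_of_mem (Finset.mem_erase.2 ⟨hj1 v, Finset.mem_univ _⟩),
        Finset.card_erase_of_mem (Finset.mem_univ _), Finset.card_univ, ZMod.card]
      omega
    rw [himg, h1, hj2 v]
  refine ⟨psi, @hom, fun v => ⟨?_, ?_, ?_⟩⟩
  · intro u hu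
    rw [SimpleGraph.mem_neighborSet] at hu ⊢
    exact hom hu
  · intro u hu u' hu' he
    have hu : G.Adj v u := hu
    have hu' : G.Adj v u' := hu'
    have e1 : f u = f u' := congrArg (fun x => x.1.1) he
    have e2 : j u = j u' := congrArg (fun x => x.1.2) he
    by_cases hcu : f u = j v
    · have m1 : u ∈ Nc G f v (j v) := mem_Nc.2 ⟨hu, hcu⟩
      have m2 : u' ∈ Nc G f v (j v) := mem_Nc.2 ⟨hu', e1 ▸ hcu⟩
      exact heavy_inj v (Finset.mem_coe.2 m1) (Finset.mem_coe.2 m2) e2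
    · have hfu : f u ≠ f v := fun e => hf.1 hu e.symm
      obtain ⟨a, ha⟩ := Finset.card_eq_one.1 (hj3 v (f u) hfu hcu)
      have m1 : u ∈ Nc G f v (f u) := mem_Nc.2 ⟨hu, rfl⟩
      have m2 : u' ∈ Nc G f v (f u) := mem_Nc.2 ⟨hu', e1.symm⟩
      rw [ha, Finset.mem_singleton] at m1 m2
      rw [m1, m2]
  · intro y hy
    rw [SimpleGraph.mem_neighborSet] at hy
    rcases hy with ⟨hne, harc | harc⟩
    · -- LKArc (psi v) y : j v = y.1.1 ∧ f v ≠ y.1.2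
      have hk1 : y.1.2 ≠ f v := fun e => harc.2 e.symm
      have hk2 : y.1.2 ≠ j v := fun e => y.2 (harc.1.symm.trans e.symm)
      obtain ⟨u, hu, he⟩ := heavy_surj v y.1.2 hk1 hk2
      refine ⟨u, (mem_Nc.1 hu).1, ?_⟩
      apply Subtype.ext
      apply Prod.ext
      · exact (mem_Nc.1 hu).2.trans harc.1
      · exact he
    · -- LKArc y (psi v) : y.1.2 = f v ∧ y.1.1 ≠ j v
      have hk1 : y.1.1 ≠ f v := fun e => y.2 (e.trans harc.1.symm)
      have hk2 : y.1.1 ≠ j v := harc.2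
      obtain ⟨w, hw⟩ := Finset.card_eq_one.1 (hj3 v y.1.1 hk1 hk2)
      have hwmem : w ∈ Nc G f v y.1.1 := hw ▸ Finset.mem_singleton_self w
      rw [mem_Nc] at hwmem
      have hjw : j w = f v := light_jw v w hwmem.1 (hwmem.2 ▸ hk2)
      refine ⟨w, hwmem.1, ?_⟩
      apply Subtype.ext
      apply Prod.ext
      · exact hwmem.2
      · exact hjw.trans harc.1.symm

theorem stmt16 {V : Type*} [Fintype V] (p : ℕ) (hp : 2 ≤ p)
    (G : SimpleGraph V) [DecidableRel G.Adj] (hreg : G.IsRegularOfDegree (2 * p))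
    (hfree : ¬ Nonempty (completeBipartiteGraph (Fin 1) (Fin (p + 1)) ↪g G)) :
    (∃ f : V → Fin (p + 2), IsStarColoring G f) ↔
      ∃ psi : V → LKV (p + 2), IsLBH G (LstarK (p + 2)) psi := by
  constructor
  · rintro ⟨f, hf⟩
    have hf' : IsStarColoring G (fun v => (f v : ZMod (p+2))) := hf
    exact forward hp G hreg hfree _ hf'
  · rintro ⟨psi, hpsi⟩
    exact backward p G psi hpsi
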